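/- Let g ≥ h ≥ 2 be integers, let A ⊆ ℕ be an infinite C_h[g]-set in ℤ with counting function A(x) = |A ∩ {1, …, ⌊x⌋}|, and for m ≥ 2 define τ(m) := inf_{n ≥ m} A(n)(log n)^{1/h} / n^{1 - 1/h}. Then there is a constant C = C(g,h) > 0 such that for all integers N ≥ m ≥ 2, τ(m) · (N log N)^{1 - 1/h} ≤ C · Σ_{ν=1}^{N} A_ν · ν^{-(1 - 1/h)}, where A_ν = |A ∩ ((ν-1)N, νN]|. -/

import Mathlib

open Finset in
/-- Telescoping sum over `Icc`. -/
lemma tele_sum (f : ℕ → ℝ) (a : ℕ) : ∀ b, a ≤ b + 1 →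
    (∑ μ ∈ Finset.Icc a b, (f μ - f (μ + 1))) = f a - f (b + 1) := by
  intro b
  induction b with
  | zero =>
    intro hab
    interval_cases a
    · simp
    · simp
  | succ b ih =>
    intro hab
    rcases Nat.lt_or_ge a (b + 2) with hlt | hge
    · have hab' : a ≤ b + 1 := by omega
      rw [Finset.sum_Icc_succ_top hab', ih hab']
      ring
    · have : a = b + 2 := by omega
      subst this
      simp

/-- Counting split: `|A ∩ [1, μN]| = ∑_{ν=1}^{μ} |A ∩ ((ν-1)N, νN]|`. -/
lemma count_split (A : Set ℕ) (N : ℕ) : ∀ μ : ℕ,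
    (A ∩ Set.Icc 1 (μ * N)).ncard = ∑ ν ∈ Finset.Icc 1 μ, (A ∩ Set.Ioc ((ν - 1) * N) (ν * N)).ncard := by
  intro μ
  induction μ with
  | zero => simp
  | succ μ ih =>
    rw [Finset.sum_Icc_succ_top (by omega), ← ih]
    have hmul : μ * N ≤ (μ + 1) * N := Nat.mul_le_mul_right N (Nat.le_succ μ)
    have hsplit : A ∩ Set.Icc 1 ((μ + 1) * N)
        = (A ∩ Set.Icc 1 (μ * N)) ∪ (A ∩ Set.Ioc (μ * N) ((μ + 1) * N)) := by
      ext x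
      simp only [Set.mem_inter_iff, Set.mem_Icc, Set.mem_Ioc, Set.mem_union]
      constructor
      · rintro ⟨hA, h1, h2⟩
        rcases le_or_gt x (μ * N) with h | h
        · exact Or.inl ⟨hA, h1, h⟩
        · exact Or.inr ⟨hA, h, h2⟩
      · rintro (⟨hA, h1, h2⟩ | ⟨hA, h1, h2⟩)
        · exact ⟨hA, h1, h2.trans hmul⟩
        · exact ⟨hA, by omega, h2⟩
    have hdisj : Disjoint (A ∩ Set.Icc 1 (μ * N)) (A ∩ Set.Ioc (μ * N) ((μ + 1) * N)) := by
      rw [Set.disjoint_left]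
      rintro x ⟨-, -, h2⟩ ⟨-, h3, -⟩
      omega
    rw [hsplit, Set.ncard_union_eq hdisj
      ((Set.finite_Icc 1 (μ * N)).subset Set.inter_subset_right)
      ((Set.finite_Ioc (μ * N) ((μ + 1) * N)).subset Set.inter_subset_right)]
    simp

/-- Bernoulli step: `x^{-α} - (x+1)^{-α} ≥ (α/2) x^{-α} / x` for `x ≥ 1`, `0 < α ≤ 1`. -/
lemma bernoulli_step {α x : ℝ} (hα0 : 0 < α) (hα1 : α ≤ 1) (hx : 1 ≤ x) :
    α / 2 * x ^ (-α) / x ≤ x ^ (-α) - (x + 1) ^ (-α) := by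
  have hx0 : (0:ℝ) < x := by linarith
  have hx10 : (0:ℝ) < x + 1 := by linarith
  have hP : (0:ℝ) < x ^ (-α) := Real.rpow_pos_of_pos hx0 _
  have hB : (1 - 1 / (x + 1)) ^ α ≤ 1 - α * (1 / (x + 1)) := by
    have := rpow_one_add_le_one_add_mul_self (s := -(1 / (x + 1)))
      (by
        have : 1 / (x + 1) ≤ 1 := by
          rw [div_le_one hx10]; linarith
        linarith) hα0.le hα1
    calc (1 - 1 / (x + 1)) ^ α = (1 + -(1 / (x + 1))) ^ α := by ring_nf
      _ ≤ 1 + α * -(1 / (x + 1)) := this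
      _ = 1 - α * (1 / (x + 1)) := by ring
  have h2 : (x + 1) ^ (-α) = x ^ (-α) * (1 - 1 / (x + 1)) ^ α := by
    have e1 : (1 - 1 / (x + 1)) = x / (x + 1) := by field_simp; ring
    rw [e1, Real.div_rpow hx0.le hx10.le, Real.rpow_neg hx0.le, Real.rpow_neg hx10.le]
    have hxα : x ^ α ≠ 0 := ne_of_gt (Real.rpow_pos_of_pos hx0 _)
    have hx1α : (x + 1) ^ α ≠ 0 := ne_of_gt (Real.rpow_pos_of_pos hx10 _)
    field_simp
  rw [h2]
  have key : x ^ (-α) * (α / (x + 1)) ≤ x ^ (-α) - x ^ (-α) * (1 - 1 / (x + 1)) ^ α := by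
    have : x ^ (-α) * (1 - 1 / (x + 1)) ^ α ≤ x ^ (-α) * (1 - α * (1 / (x + 1))) :=
      mul_le_mul_of_nonneg_left hB hP.le
    have expand : x ^ (-α) * (1 - α * (1 / (x + 1))) = x ^ (-α) - x ^ (-α) * (α / (x + 1)) := by
      ring
    linarith
  refine le_trans ?_ key
  have e : α / 2 * x ^ (-α) / x = x ^ (-α) * α / (2 * x) := by ring
  rw [e, ← mul_div_assoc]
  gcongr
  · linarith

/-- `A ⊆ Γ` is a `C_h[g]`-set. -/
def IsChSet {Γ : Type*} [AddCommGroup Γ] (h g : ℕ) (A : Set Γ) : Prop :=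
  ∀ X : Finset Γ, X.card = h → ∀ K : Finset Γ, K.card = g →
    ∃ k ∈ K, ¬ (∀ x ∈ X, x + k ∈ A)

theorem stmt18 (g h : ℕ) (hh : 2 ≤ h) (hgh : h ≤ g) :
    ∃ C : ℝ, 0 < C ∧ ∀ A : Set ℕ, A.Infinite →
      IsChSet h g ((fun a : ℕ => (a : ℤ)) '' A) →
      ∀ m N : ℕ, 2 ≤ m → m ≤ N →
        sInf {x : ℝ | ∃ n : ℕ, m ≤ n ∧
            x = ((A ∩ Set.Icc 1 n).ncard : ℝ) * (Real.log n) ^ ((1 : ℝ) / h)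
              / (n : ℝ) ^ (1 - (1 : ℝ) / h)}
          * ((N : ℝ) * Real.log N) ^ (1 - (1 : ℝ) / h)
        ≤ C * ∑ ν ∈ Finset.Icc 1 N,
            ((A ∩ Set.Ioc ((ν - 1) * N) (ν * N)).ncard : ℝ) * (ν : ℝ) ^ (-(1 - (1 : ℝ) / h)) := by
  classical
  have hh' : (2:ℝ) ≤ (h:ℝ) := by exact_mod_cast hh
  have hhpos : (0:ℝ) < h := by linarith
  set α : ℝ := 1 - (1:ℝ)/h with hαdef
  have hinv_pos : 0 < (1:ℝ)/h := by positivity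
  have hinv_le : (1:ℝ)/h ≤ 1/2 := by
    rw [div_le_div_iff₀ hhpos (by norm_num)]; linarith
  have hα0 : 0 < α := by rw [hαdef]; linarith
  have hα1 : α ≤ 1 := by rw [hαdef]; linarith
  have h2h : (0:ℝ) < (2:ℝ) ^ ((1:ℝ)/h) := Real.rpow_pos_of_pos (by norm_num) _
  refine ⟨2 * (2:ℝ) ^ ((1:ℝ)/h) / α, by positivity, ?_⟩
  intro A _ _ m N hm hmN
  set S : Set ℝ := {x : ℝ | ∃ n : ℕ, m ≤ n ∧
      x = ((A ∩ Set.Icc 1 n).ncard : ℝ) * (Real.log n) ^ ((1 : ℝ) / h)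
        / (n : ℝ) ^ α} with hSdef
  set T : ℝ := sInf S with hTdef
  -- basic facts
  have hN2 : 2 ≤ N := le_trans hm hmN
  have hN1R : (1:ℝ) < (N:ℝ) := by exact_mod_cast lt_of_lt_of_le one_lt_two hN2
  have hNpos : (0:ℝ) < N := by linarith
  have hlogN : 0 < Real.log N := Real.log_pos hN1R
  have hSne : S.Nonempty := ⟨_, m, le_refl m, rfl⟩
  have hSnonneg : ∀ x ∈ S, (0:ℝ) ≤ x := by
    rintro x ⟨n, hn, rfl⟩
    have h1n : (1:ℝ) ≤ (n:ℝ) := by exact_mod_cast le_trans (le_trans one_le_two hm) hn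
    exact div_nonneg (mul_nonneg (Nat.cast_nonneg _)
      (Real.rpow_nonneg (Real.log_nonneg h1n) _)) (Real.rpow_nonneg (by linarith) _)
  have hbdd : BddBelow S := ⟨0, fun x hx => hSnonneg x hx⟩
  have hT0 : 0 ≤ T := le_csInf hSne hSnonneg
  have hTle : ∀ n : ℕ, m ≤ n →
      T ≤ ((A ∩ Set.Icc 1 n).ncard : ℝ) * (Real.log n) ^ ((1 : ℝ) / h) / (n : ℝ) ^ α :=
    fun n hn => csInf_le hbdd ⟨n, hn, rfl⟩
  -- the lower bound on the count, for each μ ∈ [1, N]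
  have hcnt : ∀ μ ∈ Finset.Icc 1 N,
      T * ((μ * N : ℕ) : ℝ) ^ α / (Real.log ((μ * N : ℕ) : ℝ)) ^ ((1:ℝ)/h)
        ≤ ((A ∩ Set.Icc 1 (μ * N)).ncard : ℝ) := by
    intro μ hμ
    rw [Finset.mem_Icc] at hμ
    have hmn : m ≤ μ * N := le_trans hmN (Nat.le_mul_of_pos_left N (by omega))
    have h2n : 2 ≤ μ * N := le_trans hm hmn
    have h1n : (1:ℝ) < ((μ * N : ℕ) : ℝ) := by exact_mod_cast lt_of_lt_of_le one_lt_two h2n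
    have hP : (0:ℝ) < ((μ * N : ℕ) : ℝ) ^ α := Real.rpow_pos_of_pos (by linarith) _
    have hL : (0:ℝ) < Real.log ((μ * N : ℕ) : ℝ) := Real.log_pos h1n
    have hLh : (0:ℝ) < (Real.log ((μ * N : ℕ) : ℝ)) ^ ((1:ℝ)/h) :=
      Real.rpow_pos_of_pos hL _
    have h1 := hTle (μ * N) hmn
    rw [le_div_iff₀ hP] at h1
    rw [div_le_iff₀ hLh]
    linarith
  -- notation
  have hQ : (0:ℝ) < (2 * Real.log N) ^ ((1:ℝ)/h) := Real.rpow_pos_of_pos (by linarith) _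
  have hLhN : (0:ℝ) < (Real.log N) ^ ((1:ℝ)/h) := Real.rpow_pos_of_pos hlogN _
  -- Step: per-μ lower bound on cnt(μN) * w μ
  have key : (α / (2 * (2:ℝ) ^ ((1:ℝ)/h))) * (T * ((N:ℝ) * Real.log N) ^ α)
      ≤ ∑ ν ∈ Finset.Icc 1 N,
          ((A ∩ Set.Ioc ((ν - 1) * N) (ν * N)).ncard : ℝ) * (ν : ℝ) ^ (-α) := by
    have E1 : ((N:ℝ) * Real.log N) ^ α
        = (N:ℝ) ^ α * Real.log N / (Real.log N) ^ ((1:ℝ)/h) := by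
      rw [Real.mul_rpow hNpos.le hlogN.le, hαdef, Real.rpow_sub hlogN, Real.rpow_one,
        mul_div_assoc]
    have E2 : ((2:ℝ) * Real.log N) ^ ((1:ℝ)/h)
        = (2:ℝ) ^ ((1:ℝ)/h) * (Real.log N) ^ ((1:ℝ)/h) :=
      Real.mul_rpow (by norm_num) hlogN.le
    calc (α / (2 * (2:ℝ) ^ ((1:ℝ)/h))) * (T * ((N:ℝ) * Real.log N) ^ α)
        = (T * (N:ℝ) ^ α * (α/2) / ((2 * Real.log N) ^ ((1:ℝ)/h))) * Real.log N := by
          rw [E1, E2]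
          field_simp
      _ ≤ (T * (N:ℝ) ^ α * (α/2) / ((2 * Real.log N) ^ ((1:ℝ)/h)))
            * ∑ μ ∈ Finset.Icc 1 N, (μ:ℝ)⁻¹ := by
          apply mul_le_mul_of_nonneg_left ?_ ?_
          · -- log N ≤ harmonic sum
            have h1 : Real.log (N:ℝ) ≤ Real.log ((N:ℝ)+1) :=
              Real.log_le_log (by linarith) (by linarith)
            have h2 : Real.log ((N:ℕ)+1 : ℕ) ≤ (harmonic N : ℝ) := log_add_one_le_harmonic N
            have h3 : (harmonic N : ℝ) = ∑ μ ∈ Finset.Icc 1 N, (μ:ℝ)⁻¹ := by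
              rw [harmonic_eq_sum_Icc]
              push_cast
              rfl
            rw [h3] at h2
            push_cast at h2
            linarith
          · have h0 : (0:ℝ) ≤ T * (N:ℝ) ^ α * (α/2) :=
              mul_nonneg (mul_nonneg hT0 (Real.rpow_nonneg hNpos.le _)) (by positivity)
            exact div_nonneg h0 hQ.le
      _ = ∑ μ ∈ Finset.Icc 1 N,
            T * (N:ℝ) ^ α * (α/2) / ((2 * Real.log N) ^ ((1:ℝ)/h) * (μ:ℝ)) := by
          rw [Finset.mul_sum]
          refine Finset.sum_congr rfl fun μ _ => ?_
          rw [← div_eq_mul_inv, div_div]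
      _ ≤ ∑ μ ∈ Finset.Icc 1 N,
            (T * ((μ * N : ℕ) : ℝ) ^ α / (Real.log ((μ * N : ℕ) : ℝ)) ^ ((1:ℝ)/h))
              * (α/2 * (μ:ℝ) ^ (-α) / (μ:ℝ)) := by
          refine Finset.sum_le_sum fun μ hμ => ?_
          rw [Finset.mem_Icc] at hμ
          have hμ1 : (1:ℝ) ≤ (μ:ℝ) := by exact_mod_cast hμ.1
          have hμ0 : (0:ℝ) < (μ:ℝ) := by linarith
          have hμN : (μ:ℝ) ≤ (N:ℝ) := by exact_mod_cast hμ.2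
          have hmn2 : 2 ≤ μ * N := le_trans hm (le_trans hmN (Nat.le_mul_of_pos_left N (by omega)))
          have h1n : (1:ℝ) < ((μ * N : ℕ) : ℝ) := by exact_mod_cast lt_of_lt_of_le one_lt_two hmn2
          have hL : (0:ℝ) < Real.log ((μ * N : ℕ) : ℝ) := Real.log_pos h1n
          have hLh : (0:ℝ) < (Real.log ((μ * N : ℕ) : ℝ)) ^ ((1:ℝ)/h) :=
            Real.rpow_pos_of_pos hL _
          have ePμ : ((μ * N : ℕ) : ℝ) ^ α = (μ:ℝ) ^ α * (N:ℝ) ^ α := by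
            push_cast
            exact Real.mul_rpow hμ0.le hNpos.le
          have eR : (T * ((μ * N : ℕ) : ℝ) ^ α / (Real.log ((μ * N : ℕ) : ℝ)) ^ ((1:ℝ)/h))
                * (α/2 * (μ:ℝ) ^ (-α) / (μ:ℝ))
              = T * (N:ℝ) ^ α * (α/2) / ((Real.log ((μ * N : ℕ) : ℝ)) ^ ((1:ℝ)/h) * (μ:ℝ)) := by
            rw [ePμ, Real.rpow_neg hμ0.le]
            have hμα : (0:ℝ) < (μ:ℝ) ^ α := Real.rpow_pos_of_pos hμ0 _
            have e9 : T * ((μ:ℝ) ^ α * (N:ℝ) ^ α) / Real.log ((μ * N : ℕ) : ℝ) ^ ((1:ℝ)/h)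
                  * (α / 2 * ((μ:ℝ) ^ α)⁻¹ / (μ:ℝ))
                = ((μ:ℝ) ^ α * ((μ:ℝ) ^ α)⁻¹)
                  * (T * (N:ℝ) ^ α * (α / 2)
                      / (Real.log ((μ * N : ℕ) : ℝ) ^ ((1:ℝ)/h) * (μ:ℝ))) := by
              ring
            rw [e9, mul_inv_cancel₀ (ne_of_gt hμα), one_mul]
          rw [eR]
          have hLle : (Real.log ((μ * N : ℕ) : ℝ)) ^ ((1:ℝ)/h)
              ≤ (2 * Real.log N) ^ ((1:ℝ)/h) := by
            apply Real.rpow_le_rpow hL.le ?_ (by positivity)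
            have e3 : ((μ * N : ℕ) : ℝ) = (μ:ℝ) * (N:ℝ) := by push_cast; ring
            have h4 : Real.log ((μ:ℝ) * (N:ℝ)) ≤ Real.log ((N:ℝ) * (N:ℝ)) := by
              apply Real.log_le_log (by positivity)
              exact mul_le_mul_of_nonneg_right hμN hNpos.le
            have h5 : Real.log ((N:ℝ) * (N:ℝ)) = Real.log N + Real.log N :=
              Real.log_mul (ne_of_gt hNpos) (ne_of_gt hNpos)
            rw [e3]
            linarith
          gcongr
      _ ≤ ∑ μ ∈ Finset.Icc 1 N,
            ((A ∩ Set.Icc 1 (μ * N)).ncard : ℝ)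
              * ((μ:ℝ) ^ (-α) - (((μ + 1 : ℕ)) : ℝ) ^ (-α)) := by
          refine Finset.sum_le_sum fun μ hμ => ?_
          have hμ1 : (1:ℝ) ≤ (μ:ℝ) := by
            rw [Finset.mem_Icc] at hμ
            exact_mod_cast hμ.1
          have hw := bernoulli_step hα0 hα1 hμ1
          have hcast : (((μ + 1 : ℕ)) : ℝ) = (μ:ℝ) + 1 := by push_cast; ring
          rw [hcast]
          refine mul_le_mul (hcnt μ hμ) hw ?_ (Nat.cast_nonneg _)
          have : (0:ℝ) < (μ:ℝ) := by linarith
          positivity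
      _ = ∑ μ ∈ Finset.Icc 1 N, ∑ ν ∈ Finset.Icc 1 μ,
            ((A ∩ Set.Ioc ((ν - 1) * N) (ν * N)).ncard : ℝ)
              * ((μ:ℝ) ^ (-α) - (((μ + 1 : ℕ)) : ℝ) ^ (-α)) := by
          refine Finset.sum_congr rfl fun μ _ => ?_
          rw [← Finset.sum_mul]
          congr 1
          have h2 : ((A ∩ Set.Icc 1 (μ * N)).ncard : ℝ)
              = (((∑ ν ∈ Finset.Icc 1 μ, (A ∩ Set.Ioc ((ν - 1) * N) (ν * N)).ncard) : ℕ) : ℝ) := by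
            exact_mod_cast congrArg (Nat.cast : ℕ → ℝ) (count_split A N μ)
          rw [h2, Nat.cast_sum]
      _ = ∑ ν ∈ Finset.Icc 1 N, ∑ μ ∈ Finset.Icc ν N,
            ((A ∩ Set.Ioc ((ν - 1) * N) (ν * N)).ncard : ℝ)
              * ((μ:ℝ) ^ (-α) - (((μ + 1 : ℕ)) : ℝ) ^ (-α)) := by
          exact Finset.sum_comm' fun μ ν => by simp only [Finset.mem_Icc]; omega
      _ = ∑ ν ∈ Finset.Icc 1 N,
            ((A ∩ Set.Ioc ((ν - 1) * N) (ν * N)).ncard : ℝ)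
              * ((ν:ℝ) ^ (-α) - (((N + 1 : ℕ)) : ℝ) ^ (-α)) := by
          refine Finset.sum_congr rfl fun ν hν => ?_
          rw [Finset.mem_Icc] at hν
          rw [← Finset.mul_sum, tele_sum (fun μ : ℕ => ((μ:ℕ):ℝ) ^ (-α)) ν N (by omega)]
      _ ≤ ∑ ν ∈ Finset.Icc 1 N,
            ((A ∩ Set.Ioc ((ν - 1) * N) (ν * N)).ncard : ℝ) * (ν:ℝ) ^ (-α) := by
          refine Finset.sum_le_sum fun ν _ => ?_
          refine mul_le_mul_of_nonneg_left ?_ (Nat.cast_nonneg _)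
          exact sub_le_self _ (Real.rpow_nonneg (Nat.cast_nonneg _) _)
  -- conclude
  calc T * ((N:ℝ) * Real.log N) ^ α
      = (2 * (2:ℝ) ^ ((1:ℝ)/h) / α)
          * ((α / (2 * (2:ℝ) ^ ((1:ℝ)/h))) * (T * ((N:ℝ) * Real.log N) ^ α)) := by
        field_simp
    _ ≤ (2 * (2:ℝ) ^ ((1:ℝ)/h) / α) * ∑ ν ∈ Finset.Icc 1 N,
          ((A ∩ Set.Ioc ((ν - 1) * N) (ν * N)).ncard : ℝ) * (ν : ℝ) ^ (-α) :=
        mul_le_mul_of_nonneg_left key (by positivity)
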